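/- Let Φ be a finite root system in a Euclidean space with a choice of positive roots Φ⁺, and let x be an elliptic element of the extended Weyl group W⋊⟨σ⟩ (i.e. x fixes no nonzero vector of ℝΦ). Then for every root α ∈ Φ⁺ (resp. α ∈ Φ⁻) there exists a positive integer i with xⁱ(α) ∈ Φ⁻ (resp. xⁱ(α) ∈ Φ⁺); in particular the quantity n_x(α) = min{ i ≥ 1 : xⁱ(α) lies in the opposite half of Φ } is well defined. -/
import Mathlib


open scoped Pointwise

lemma key_orbit {V : Type*} [AddCommGroup V] [Module ℝ V]
    (Φ : Set V) (hfin : Φ.Finite)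
    (f : V →ₗ[ℝ] ℝ)
    (x : V ≃ₗ[ℝ] V) (hxΦ : ∀ α ∈ Φ, x α ∈ Φ)
    (hell : ∀ v ∈ Submodule.span ℝ Φ, x v = v → v = 0)
    (α : V) (hα : α ∈ Φ) :
    ∃ N : ℕ, 1 ≤ N ∧ (∀ i, (x ^ i) α ∈ Φ) ∧
      ∑ i ∈ Finset.range N, f ((x ^ i) α) = 0 := by
  have hmem : ∀ i : ℕ, (x ^ i) α ∈ Φ := by
    intro i
    induction i with
    | zero => simpa using hα
    | succ n ih =>
      rw [pow_succ'] 
      exact hxΦ _ ih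
  haveI := hfin.to_subtype
  obtain ⟨i, j, hne, hij⟩ := Finite.exists_ne_map_eq_of_infinite
    (fun i : ℕ => (⟨(x ^ i) α, hmem i⟩ : Φ))
  wlog hlt : i < j generalizing i j
  · exact this j i hne.symm hij.symm (by omega)
  have hij' : (x ^ i) α = (x ^ j) α := congrArg Subtype.val hij
  set N := j - i with hN
  have hNpos : 1 ≤ N := by omega
  have hper : (x ^ N) α = α := by
    have h2 : (x ^ (i + N)) α = (x ^ i) α := by
      rw [show i + N = j by omega]; exact hij'.symm
    rw [pow_add] at h2
    have h3 : (x ^ i) ((x ^ N) α) = (x ^ i) α := h2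
    exact (x ^ i).injective h3
  refine ⟨N, hNpos, hmem, ?_⟩
  set v : V := ∑ k ∈ Finset.range N, (x ^ k) α with hv
  have hvspan : v ∈ Submodule.span ℝ Φ :=
    Submodule.sum_mem _ fun k _ => Submodule.subset_span (hmem k)
  have hxv : x v = v := by
    rw [hv, map_sum]
    have h1 : ∀ k, x ((x ^ k) α) = (x ^ (k + 1)) α := by
      intro k; rw [pow_succ']; rfl
    simp only [h1]
    have h2 := Finset.sum_range_succ' (fun k => (x ^ k) α) N
    have h3 := Finset.sum_range_succ (fun k => (x ^ k) α) N
    rw [h3] at h2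
    simp only [pow_zero] at h2
    rw [show ((1 : V ≃ₗ[ℝ] V)) α = α from rfl, hper] at h2
    exact add_right_cancel h2.symm
  have hv0 : v = 0 := hell v hvspan hxv
  have := congrArg f hv0
  rw [hv, map_sum] at this
  simpa using this

/-- For an elliptic element `x` of the extended Weyl group acting on a finite
root system `Φ = Φ⁺ ⊔ Φ⁻` (with `Φ⁻ = -Φ⁺` cut out by a linear functional `f` positive on `Φ⁺`),
every positive root is eventually sent to a negative root by some positive power of `x`, and
vice versa; in particular `n_x(α)` is well defined. -/
theorem stmt_0
    {V : Type*} [AddCommGroup V] [Module ℝ V]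
    (Φ Φpos : Set V) (hfin : Φ.Finite) (hpos : Φpos ⊆ Φ)
    (hsplit : Φ = Φpos ∪ -Φpos) (hdisj : Disjoint Φpos (-Φpos))
    (f : V →ₗ[ℝ] ℝ) (hf : ∀ α ∈ Φpos, 0 < f α)
    (x : V ≃ₗ[ℝ] V) (hxΦ : ∀ α ∈ Φ, x α ∈ Φ)
    (hell : ∀ v ∈ Submodule.span ℝ Φ, x v = v → v = 0) :
    (∀ α ∈ Φpos, ∃ i : ℕ, 1 ≤ i ∧ (x ^ i) α ∈ -Φpos) ∧
      (∀ α ∈ -Φpos, ∃ i : ℕ, 1 ≤ i ∧ (x ^ i) α ∈ Φpos) := by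
  have hfneg : ∀ α ∈ -Φpos, f α < 0 := by
    intro α hα
    have h1 : 0 < f (-α) := hf _ (Set.mem_neg.mp hα)
    rw [map_neg] at h1; linarith
  constructor
  · intro α hα
    obtain ⟨N, hN1, hmem, hsum⟩ := key_orbit Φ hfin f x hxΦ hell α (hpos hα)
    by_contra hcon
    push_neg at hcon
    have hall : ∀ i, (x ^ i) α ∈ Φpos := by
      intro i
      rcases Nat.eq_zero_or_pos i with h | h
      · subst h; simpa using hα
      · have := hmem i
        rw [hsplit] at this
        rcases this with h' | h'
        · exact h'
        · exact absurd h' (hcon i h)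
    have : 0 < ∑ i ∈ Finset.range N, f ((x ^ i) α) :=
      Finset.sum_pos (fun i _ => hf _ (hall i)) ⟨0, by simp; omega⟩
    linarith [hsum ▸ this]
  · intro α hα
    have hαΦ : α ∈ Φ := by rw [hsplit]; exact Or.inr hα
    obtain ⟨N, hN1, hmem, hsum⟩ := key_orbit Φ hfin f x hxΦ hell α hαΦ
    by_contra hcon
    push_neg at hcon
    have hall : ∀ i, (x ^ i) α ∈ -Φpos := by
      intro i
      rcases Nat.eq_zero_or_pos i with h | h
      · subst h; simpa using hα
      · have := hmem i
        rw [hsplit] at this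
        rcases this with h' | h'
        · exact absurd h' (hcon i h)
        · exact h'
    have : ∑ i ∈ Finset.range N, f ((x ^ i) α) < 0 :=
      Finset.sum_neg (fun i _ => hfneg _ (hall i)) ⟨0, by simp; omega⟩
    linarith [hsum ▸ this]
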